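/- Helstrom limit for commuting (simultaneously diagonal) states equals the classical maximum-likelihood limit: Let (e_j)_{j=0}^{N−1} be an orthonormal basis of ℂ^N and for each n = 0,…,m−1 let ρ_n = Σ_{j=0}^{N−1} λ_{n,j}·e_j·e_jᴴ with λ_{n,j} ≥ 0 and Σ_j λ_{n,j} = 1 (so each ρ_n is a density matrix diagonal in the common basis). Then the Helstrom error probability of the equiprobable states (ρ_n)_{n=0}^{m−1} equals 1 − (1/m)·Σ_{j=0}^{N−1} max_{0≤n≤m−1} λ_{n,j}. -/

import Mathlib

open Matrix BigOperators Finset ComplexOrder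

noncomputable section

/-- A density matrix: positive semidefinite with unit trace. -/
def IsDensityMatrix {ι : Type*} [Fintype ι] (ρ : Matrix ι ι ℂ) : Prop :=
  ρ.PosSemidef ∧ ρ.trace = 1

/-- The Helstrom minimum error probability for discriminating the states `ρ n`
with prior probabilities `p n`, optimized over all POVMs. -/
def helstrom {ι : Type*} [Fintype ι] [DecidableEq ι] {m : ℕ}
    (ρ : Fin m → Matrix ι ι ℂ) (p : Fin m → ℝ) : ℝ :=
  1 - sSup { x : ℝ | ∃ M : Fin m → Matrix ι ι ℂ,
      (∀ n, (M n).PosSemidef) ∧ (∑ n, M n) = 1 ∧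
      x = ∑ n, p n * ((M n * ρ n).trace).re }

open Classical in
/-- The positive semidefinite square root (junk value `0` off the PSD cone). -/
def psdSqrt {ι : Type*} [Fintype ι] [DecidableEq ι] (A : Matrix ι ι ℂ) : Matrix ι ι ℂ :=
  if h : A.PosSemidef then
    (h.1.eigenvectorUnitary : Matrix ι ι ℂ) *
      diagonal ((↑) ∘ (Real.sqrt ·) ∘ h.1.eigenvalues) * (star h.1.eigenvectorUnitary : Matrix ι ι ℂ)
  else 0

/-- The trace norm `‖A‖₁ = tr √(Aᴴ A)`. -/
def traceNorm {ι : Type*} [Fintype ι] [DecidableEq ι] (A : Matrix ι ι ℂ) : ℝ :=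
  ((psdSqrt (Aᴴ * A)).trace).re

namespace HelstromAux

variable {N : ℕ} (e : Fin N → Fin N → ℂ)

/-- Rank one projector onto `e j`. -/
def P (j : Fin N) : Matrix (Fin N) (Fin N) ℂ := Matrix.vecMulVec (e j) (star (e j))

lemma trace_mul_P (M : Matrix (Fin N) (Fin N) ℂ) (j : Fin N) :
    (M * P e j).trace = star (e j) ⬝ᵥ (M *ᵥ e j) := by
  simp only [Matrix.trace, Matrix.diag, Matrix.mul_apply, P, Matrix.vecMulVec_apply,
    dotProduct, Matrix.mulVec, Pi.star_apply, Finset.mul_sum]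
  exact Finset.sum_congr rfl fun a _ => Finset.sum_congr rfl fun b _ => by ring

lemma P_posSemidef (j : Fin N) : (P e j).PosSemidef := by
  rw [Matrix.posSemidef_iff_dotProduct_mulVec]
  constructor
  · ext a b
    simp only [Matrix.conjTranspose_apply, P, Matrix.vecMulVec_apply, Pi.star_apply]
    rw [StarMul.star_mul, star_star]
  · intro x
    have h : star x ⬝ᵥ (P e j *ᵥ x) = star (star (e j) ⬝ᵥ x) * (star (e j) ⬝ᵥ x) := by
      simp only [dotProduct, Matrix.mulVec, P, Matrix.vecMulVec_apply, Pi.star_apply,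
        star_sum, StarMul.star_mul, star_star]
      rw [Finset.sum_mul_sum]
      simp only [Finset.mul_sum]
      exact Finset.sum_congr rfl fun a _ => Finset.sum_congr rfl fun b _ => by ring
    rw [h]
    exact star_mul_self_nonneg _

variable (he : ∀ j j', ∑ k, star (e j k) * e j' k = if j = j' then 1 else 0)

include he

lemma sum_P : ∑ j, P e j = 1 := by
  have hW : (Matrix.of fun j k => star (e j k)) * (Matrix.of fun j k => star (e j k))ᴴ
      = (1 : Matrix (Fin N) (Fin N) ℂ) := by
    ext j j'
    simpa [Matrix.mul_apply, Matrix.conjTranspose_apply, Matrix.one_apply] using he j j'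
  have hW' := mul_eq_one_comm.mp hW
  ext a b
  have h2 := congrFun (congrFun hW' a) b
  simp only [Matrix.mul_apply, Matrix.conjTranspose_apply, Matrix.of_apply, star_star,
    Matrix.one_apply] at h2
  simpa [Matrix.sum_apply, P, Matrix.vecMulVec_apply, Matrix.one_apply] using h2

lemma trace_P (j : Fin N) : (P e j).trace = 1 := by
  have h := he j j
  rw [if_pos rfl] at h
  rw [← h]
  simp only [Matrix.trace, Matrix.diag, P, Matrix.vecMulVec_apply, Pi.star_apply]
  exact Finset.sum_congr rfl fun a _ => by ring

lemma trace_P_mul_P (j j' : Fin N) :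
    (P e j * P e j').trace = if j = j' then 1 else 0 := by
  rw [trace_mul_P]
  have hv : (P e j *ᵥ e j') = fun a => (if j = j' then (1:ℂ) else 0) * e j a := by
    funext a
    simp only [Matrix.mulVec, dotProduct, P, Matrix.vecMulVec_apply, Pi.star_apply]
    rw [show (∑ b, e j a * star (e j b) * e j' b) = e j a * ∑ b, star (e j b) * e j' b from by
      rw [Finset.mul_sum]; exact Finset.sum_congr rfl fun b _ => by ring]
    rw [he j j']; ring
  rw [hv]
  have h2 : star (e j') ⬝ᵥ (fun a => (if j = j' then (1:ℂ) else 0) * e j a)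
      = (if j = j' then (1:ℂ) else 0) * (if j' = j then (1:ℂ) else 0) := by
    simp only [dotProduct, Pi.star_apply]
    rw [show (∑ a, star (e j' a) * ((if j = j' then (1:ℂ) else 0) * e j a))
        = (if j = j' then (1:ℂ) else 0) * ∑ a, star (e j' a) * e j a from by
      rw [Finset.mul_sum]; exact Finset.sum_congr rfl fun a _ => by ring]
    rw [he j' j]
  rw [h2]
  by_cases h : j = j'
  · simp [h]
  · simp [h, Ne.symm h]

end HelstromAux

open HelstromAux

set_option maxHeartbeats 1600000 in
/-- Helstrom limit for commuting (simultaneously diagonal) states equals the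
classical maximum-likelihood limit. -/
theorem helstrom_commuting {N m : ℕ} (hm : 1 ≤ m)
    (e : Fin N → Fin N → ℂ)
    (he : ∀ j j', ∑ k, star (e j k) * e j' k = if j = j' then 1 else 0)
    (lam : Fin m → Fin N → ℝ)
    (hlam : ∀ n j, 0 ≤ lam n j) (hsum : ∀ n, ∑ j, lam n j = 1) :
    helstrom (fun n => ∑ j, (lam n j : ℂ) • Matrix.vecMulVec (e j) (star (e j)))
        (fun _ => 1/(m:ℝ))
      = 1 - (1/(m:ℝ)) * ∑ j, sSup (Set.range fun n => lam n j) := by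
  classical
  haveI : Nonempty (Fin m) := ⟨⟨0, by omega⟩⟩
  set ρ : Fin m → Matrix (Fin N) (Fin N) ℂ :=
    fun n => ∑ j, (lam n j : ℂ) • P e j with hρ
  set s : Fin N → ℝ := fun j => sSup (Set.range fun n => lam n j) with hs
  have hsle : ∀ n j, lam n j ≤ s j := fun n j =>
    le_csSup (Set.finite_range _).bddAbove ⟨n, rfl⟩
  have hsmem : ∀ j, ∃ n, lam n j = s j := fun j =>
    Set.Nonempty.csSup_mem (Set.range_nonempty _) (Set.finite_range _)
  choose g hg using hsmem
  set V : ℝ := (1/(m:ℝ)) * ∑ j, s j with hV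
  -- trace of P e j times ρ n
  have htrPρ : ∀ j n, (P e j * ρ n).trace = (lam n j : ℂ) := by
    intro j n
    show (P e j * ∑ j', (lam n j' : ℂ) • P e j').trace = (lam n j : ℂ)
    simp only [Finset.mul_sum, Matrix.mul_smul, Matrix.trace_sum, Matrix.trace_smul]
    simp only [trace_P_mul_P e he, smul_eq_mul, mul_ite, mul_one, mul_zero]
    simp [Finset.sum_ite_eq, Finset.sum_ite_eq']
  -- the set appearing in helstrom
  set S : Set ℝ := { x : ℝ | ∃ M : Fin m → Matrix (Fin N) (Fin N) ℂ,
      (∀ n, (M n).PosSemidef) ∧ (∑ n, M n) = 1 ∧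
      x = ∑ n, (1/(m:ℝ)) * ((M n * ρ n).trace).re } with hS
  -- upper bound
  have hub : ∀ x ∈ S, x ≤ V := by
    rintro x ⟨M, hPSD, hone, rfl⟩
    set q : Fin m → Fin N → ℝ := fun n j => ((M n * P e j).trace).re with hq
    have hq0 : ∀ n j, 0 ≤ q n j := by
      intro n j
      show 0 ≤ ((M n * P e j).trace).re
      rw [trace_mul_P]
      exact_mod_cast (Complex.le_def.mp ((hPSD n).dotProduct_mulVec_nonneg (e j))).1
    have hqsum : ∀ j, ∑ n, q n j = 1 := by
      intro j
      have h1 : (∑ n, (M n * P e j).trace) = 1 := by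
        rw [← Matrix.trace_sum, ← Finset.sum_mul, hone, one_mul, trace_P e he]
      have h2 := congrArg Complex.re h1
      rw [Complex.re_sum] at h2
      show (∑ n, ((M n * P e j).trace).re) = 1
      simpa using h2
    have hre : ∀ n, ((M n * ρ n).trace).re = ∑ j, lam n j * q n j := by
      intro n
      show ((M n * ∑ j, (lam n j : ℂ) • P e j).trace).re = ∑ j, lam n j * q n j
      simp only [Finset.mul_sum, Matrix.mul_smul, Matrix.trace_sum, Matrix.trace_smul]
      rw [Complex.re_sum]
      exact Finset.sum_congr rfl fun j _ => by
        simp [hq, Complex.mul_re]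
    calc (∑ n, (1/(m:ℝ)) * ((M n * ρ n).trace).re)
        = (1/(m:ℝ)) * ∑ n, ∑ j, lam n j * q n j := by
          rw [Finset.mul_sum]; exact Finset.sum_congr rfl fun n _ => by rw [hre]
      _ ≤ (1/(m:ℝ)) * ∑ j, s j := by
          apply mul_le_mul_of_nonneg_left _ (by positivity)
          rw [Finset.sum_comm]
          apply Finset.sum_le_sum
          intro j _
          calc (∑ n, lam n j * q n j) ≤ ∑ n, s j * q n j :=
                Finset.sum_le_sum fun n _ =>
                  mul_le_mul_of_nonneg_right (hsle n j) (hq0 n j)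
            _ = s j := by rw [← Finset.mul_sum, hqsum j, mul_one]
  -- membership of V
  have hmem : V ∈ S := by
    refine ⟨fun n => ∑ j, if g j = n then P e j else 0, ?_, ?_, ?_⟩
    · intro n
      apply Finset.sum_induction _ Matrix.PosSemidef (fun a b ha hb => ha.add hb)
        Matrix.PosSemidef.zero
      intro j _
      by_cases h : g j = n
      · simpa [h] using P_posSemidef e j
      · rw [if_neg h]; exact Matrix.PosSemidef.zero
    · rw [Finset.sum_comm]
      rw [← sum_P e he]
      exact Finset.sum_congr rfl fun j _ => by simp [Finset.sum_ite_eq, Finset.sum_ite_eq']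
    · have htr : ∀ n, ((∑ j, if g j = n then P e j else 0) * ρ n).trace
          = ∑ j, if g j = n then (lam n j : ℂ) else 0 := by
        intro n
        rw [Finset.sum_mul, Matrix.trace_sum]
        exact Finset.sum_congr rfl fun j _ => by
          by_cases h : g j = n
          · simp [h, htrPρ j n]
          · simp [h]
      have hre2 : ∀ n, (((∑ j, if g j = n then P e j else 0) * ρ n).trace).re
          = ∑ j, if g j = n then lam n j else 0 := by
        intro n
        rw [htr n, Complex.re_sum]
        exact Finset.sum_congr rfl fun j _ => by
          by_cases h : g j = n <;> simp [h]
      rw [hV]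
      calc (1/(m:ℝ)) * ∑ j, s j
          = ∑ n, (1/(m:ℝ)) * ∑ j, if g j = n then lam n j else 0 := by
            rw [← Finset.mul_sum, Finset.sum_comm]
            congr 1
            refine Finset.sum_congr rfl fun j _ => ?_
            simp [Finset.sum_ite_eq, hg j]
        _ = ∑ n, (1/(m:ℝ)) * (((∑ j, if g j = n then P e j else 0) * ρ n).trace).re :=
            Finset.sum_congr rfl fun n _ => by rw [hre2]
  have hSup : sSup S = V :=
    le_antisymm (csSup_le ⟨V, hmem⟩ hub)
      (le_csSup ⟨V, fun x hx => hub x hx⟩ hmem)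
  show 1 - sSup S = 1 - V
  rw [hSup]
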